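/- Let P_s be a sign pattern on n nodes and let V_C ⊆ V be a positive signed zero forcing set of P_s. Then for every A ∈ Q_s(P_s), every real λ > 0, and every ν ∈ ℝ^n with ν^T A = λ ν^T and ν_j = 0 for all j ∈ V_C, one has ν = 0. By the PBH test, this means every positive eigenvalue of every A ∈ Q_s(P_s) is a controllable eigenvalue of the pair (A, B), where B has columns e_j for j ∈ V_C. -/

import Mathlib

/-- An entry of a sign pattern: `+`, `-`, `0`, or `?` (unrestricted). -/
inductive SignPatEntry : Type
  | pos | neg | zero | unk
deriving DecidableEq

namespace SignPatEntry

/-- Sign inversion: `inv(+) = -`, `inv(-) = +`. -/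
def inv : SignPatEntry → SignPatEntry
  | pos => neg
  | neg => pos
  | zero => zero
  | unk => unk

/-- Product of signs (used as `s · P(u,v)`). -/
def mul : SignPatEntry → SignPatEntry → SignPatEntry
  | pos, y => y
  | neg, y => y.inv
  | zero, _ => zero
  | unk, _ => unk

end SignPatEntry

/-- A real number matches a sign-pattern entry. -/
def matchesSign : SignPatEntry → ℝ → Prop
  | .pos, a => 0 < a
  | .neg, a => a < 0
  | .zero, a => a = 0
  | .unk, _ => True

/-- The qualitative class of a sign pattern: real matrices whose entries have
the prescribed signs. -/
def QClass {n : ℕ} (P : Fin n → Fin n → SignPatEntry)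
    (A : Matrix (Fin n) (Fin n) ℝ) : Prop :=
  ∀ i j : Fin n, matchesSign (P i j) (A i j)

/-- A configuration of the signing-and-coloring game: a set of black nodes and a
partial marking of nodes with signs. -/
structure Config (n : ℕ) where
  black : Finset (Fin n)
  mark : Fin n → Option SignPatEntry

/-- The set of white out-neighbors of `v` (out-neighbors of `v` are the `u` with
`P u v ≠ 0`). -/
def Wset {n : ℕ} (P : Fin n → Fin n → SignPatEntry) (c : Config n) (v : Fin n) :
    Finset (Fin n) :=
  Finset.univ.filter (fun u => u ∉ c.black ∧ P u v ≠ SignPatEntry.zero)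

/-- One step of the signing and coloring rule, played on the pattern `P`. -/
inductive Step {n : ℕ} (P : Fin n → Fin n → SignPatEntry) : Config n → Config n → Prop
  /-- (1) a pivot node `v` with a single white out-neighbor `u` forces `u` black. -/
  | force1 (c : Config n) (v u : Fin n)
      (hv : v ∈ c.black ∨ P v v ≠ SignPatEntry.unk)
      (hW : Wset P c v = {u}) :
      Step P c ⟨insert u c.black, c.mark⟩
  /-- (2) if all white out-neighbors of a pivot `v` are marked consistently
  (all with `m(u) = P(u,v)` or all with `m(u) = -P(u,v)`), they all become black. -/
  | force2 (c : Config n) (v : Fin n)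
      (hv : v ∈ c.black ∨ P v v ≠ SignPatEntry.unk)
      (hall : (∀ u ∈ Wset P c v, c.mark u = some (P u v)) ∨
              (∀ u ∈ Wset P c v, c.mark u = some (P u v).inv)) :
      Step P c ⟨c.black ∪ Wset P c v, c.mark⟩
  /-- (3) if exactly one white out-neighbor `w` of a pivot `v` is unmarked, at least one
  is marked, and every marked one satisfies `m(u) = s · P(u,v)`, then `w` gets
  marked with `-s · P(w,v)`. -/
  | force3 (c : Config n) (v w : Fin n) (s : SignPatEntry)
      (hv : v ∈ c.black ∨ P v v ≠ SignPatEntry.unk)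
      (hs : s = SignPatEntry.pos ∨ s = SignPatEntry.neg)
      (hw : w ∈ Wset P c v) (hwnone : c.mark w = none)
      (hmarked : ∀ u ∈ Wset P c v, u ≠ w → c.mark u = some (s.mul (P u v)))
      (hex : ∃ u ∈ Wset P c v, u ≠ w) :
      Step P c ⟨c.black, Function.update c.mark w (some (s.inv.mul (P w v)))⟩
  /-- (4) if no white node is marked, an arbitrary white node may be marked `+`. -/
  | force4 (c : Config n) (u : Fin n)
      (hnomark : ∀ x : Fin n, x ∉ c.black → c.mark x = none)
      (hu : u ∉ c.black) :
      Step P c ⟨c.black, Function.update c.mark u (some SignPatEntry.pos)⟩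

/-- The initial configuration: black set `Z`, no marks. -/
def initConfig {n : ℕ} (Z : Finset (Fin n)) : Config n := ⟨Z, fun _ => none⟩

/-- `Z` is a signed zero forcing set of the pattern `P`. -/
def SignedZFS {n : ℕ} (P : Fin n → Fin n → SignPatEntry) (Z : Finset (Fin n)) : Prop :=
  ∃ c : Config n, Relation.ReflTransGen (Step P) (initConfig Z) c ∧ c.black = Finset.univ

/-- The negative looped pattern `P⁻`: off-diagonal as `P`; diagonal `-` if
`P i i ∈ {0,-}`, and `?` if `P i i ∈ {+,?}`. -/
def negLooped {n : ℕ} (P : Fin n → Fin n → SignPatEntry) :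
    Fin n → Fin n → SignPatEntry := fun i j =>
  if i = j then
    (match P i i with
      | SignPatEntry.zero => SignPatEntry.neg
      | SignPatEntry.neg => SignPatEntry.neg
      | _ => SignPatEntry.unk)
  else P i j

/-- The positive looped pattern `P⁺`: off-diagonal as `P`; diagonal `+` if
`P i i ∈ {0,+}`, and `?` if `P i i ∈ {-,?}`. -/
def posLooped {n : ℕ} (P : Fin n → Fin n → SignPatEntry) :
    Fin n → Fin n → SignPatEntry := fun i j =>
  if i = j then
    (match P i i with
      | SignPatEntry.zero => SignPatEntry.pos
      | SignPatEntry.pos => SignPatEntry.pos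
      | _ => SignPatEntry.unk)
  else P i j

/-- The sign of a real number, as a sign-pattern entry. -/
noncomputable def sgnR (x : ℝ) : SignPatEntry :=
  if 0 < x then SignPatEntry.pos else if x < 0 then SignPatEntry.neg else SignPatEntry.zero

section Aux

open SignPatEntry

lemma ms_pn {s : SignPatEntry} (h0 : s ≠ SignPatEntry.zero) (hu : s ≠ SignPatEntry.unk) :
    s = SignPatEntry.pos ∨ s = SignPatEntry.neg := by cases s <;> simp_all

lemma ms_inv_iff {s : SignPatEntry} {x : ℝ} : matchesSign s.inv x ↔ matchesSign s (-x) := by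
  cases s <;> simp [matchesSign, SignPatEntry.inv]

lemma ms_ne_zero {s : SignPatEntry} {x : ℝ}
    (hs : s = SignPatEntry.pos ∨ s = SignPatEntry.neg) (hx : matchesSign s x) : x ≠ 0 := by
  rcases hs with h | h <;> subst h <;> simp only [matchesSign] at hx <;> intro h0 <;>
    rw [h0] at hx <;> exact lt_irrefl 0 hx

lemma ms_mul_pos {s : SignPatEntry} {x y : ℝ}
    (hs : s = SignPatEntry.pos ∨ s = SignPatEntry.neg)
    (hx : matchesSign s x) (hy : matchesSign s y) : 0 < x * y := by
  rcases hs with h | h <;> subst h <;> simp only [matchesSign] at hx hy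
  · exact mul_pos hx hy
  · exact mul_pos_of_neg_of_neg hx hy

lemma ms_of_mul_pos {s : SignPatEntry} {x y : ℝ}
    (hs : s = SignPatEntry.pos ∨ s = SignPatEntry.neg)
    (hy : matchesSign s y) (hxy : 0 < x * y) : matchesSign s x := by
  rcases hs with h | h <;> subst h <;> simp only [matchesSign] at hy ⊢ <;> nlinarith

/-- The qualitative invariant of the signing-and-coloring game:
black nodes are zero, and marked nodes have sign consistent with
their mark, up to a global sign `ε`. -/
def GameInv {n : ℕ} (ν : Fin n → ℝ) (c : Config n) : Prop :=
  (∀ u ∈ c.black, ν u = 0) ∧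
  ∃ ε : ℝ, (ε = 1 ∨ ε = -1) ∧
    ∀ u s, c.mark u = some s → ν u = 0 ∨ matchesSign s (ε * ν u)

lemma negLooped_diag {n : ℕ} (P : Fin n → Fin n → SignPatEntry) (v : Fin n) :
    negLooped P v v = SignPatEntry.neg ∨ negLooped P v v = SignPatEntry.unk := by
  simp only [negLooped, if_pos rfl]
  cases P v v <;> simp

lemma key_sum {n : ℕ} (P : Fin n → Fin n → SignPatEntry)
    (hP : ∀ i j : Fin n, i ≠ j → P i j ≠ SignPatEntry.unk)
    (A : Matrix (Fin n) (Fin n) ℝ) (hA : QClass P A)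
    (lam : ℝ) (hlam : 0 < lam) (ν : Fin n → ℝ)
    (heig : Matrix.vecMul ν A = lam • ν)
    (c : Config n) (hblack : ∀ u ∈ c.black, ν u = 0) (v : Fin n)
    (hv : v ∈ c.black ∨ negLooped P v v ≠ SignPatEntry.unk) :
    ∃ B : Fin n → ℝ,
      (∀ u ∈ Wset (negLooped P) c v,
        matchesSign (negLooped P u v) (B u) ∧
        (negLooped P u v = SignPatEntry.pos ∨ negLooped P u v = SignPatEntry.neg)) ∧
      ∑ u ∈ Wset (negLooped P) c v, ν u * B u = 0 := by
  classical
  refine ⟨fun u => if u = v then A v v - lam else A u v, ?_, ?_⟩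
  · intro u hu
    simp only [Wset, Finset.mem_filter] at hu
    obtain ⟨-, hwhite, hnz⟩ := hu
    by_cases huv : u = v
    · subst huv
      have hvwhite := hwhite
      have hQvv : negLooped P u u ≠ SignPatEntry.unk := by
        rcases hv with h | h
        · exact absurd h hvwhite
        · exact h
      have hneg : negLooped P u u = SignPatEntry.neg := by
        rcases negLooped_diag P u with h | h
        · exact h
        · exact absurd h hQvv
      have hAvv : A u u ≤ 0 := by
        have := hA u u
        have hPuu : P u u = SignPatEntry.zero ∨ P u u = SignPatEntry.neg := by
          have := hneg
          simp only [negLooped, if_pos rfl] at this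
          cases h : P u u <;> rw [h] at this <;> simp_all
        rcases hPuu with h | h <;> rw [h] at this <;>
          simp only [matchesSign] at this <;> linarith
      refine ⟨?_, Or.inr hneg⟩
      show matchesSign (negLooped P u u) (if u = u then A u u - lam else A u u)
      rw [hneg, if_pos rfl]
      show A u u - lam < 0
      linarith
    · have hoff : negLooped P u v = P u v := by simp [negLooped, huv]
      have hPu : P u v ≠ SignPatEntry.unk := hP u v huv
      have hPnz : P u v ≠ SignPatEntry.zero := by rw [hoff] at hnz; exact hnz
      refine ⟨?_, by rw [hoff]; exact ms_pn hPnz hPu⟩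
      simpa only [hoff, if_neg huv] using hA u v
  · have hsub : Wset (negLooped P) c v ⊆ Finset.univ := Finset.subset_univ _
    have hzero : ∀ u ∈ Finset.univ, u ∉ Wset (negLooped P) c v →
        ν u * (if u = v then A v v - lam else A u v) = 0 := by
      intro u _ hu
      simp only [Wset, Finset.mem_filter, Finset.mem_univ, true_and, not_and,
        not_not, ne_eq, Decidable.not_not] at hu
      by_cases hb : u ∈ c.black
      · rw [hblack u hb]; ring
      · have hz : negLooped P u v = SignPatEntry.zero := hu hb
        have huv : u ≠ v := by
          intro h; subst h
          rcases negLooped_diag P u with h' | h' <;> rw [hz] at h' <;> simp_all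
        rw [if_neg huv]
        have := hA u v
        have hoff : negLooped P u v = P u v := by simp [negLooped, huv]
        rw [hoff] at hz
        rw [hz] at this
        simp only [matchesSign] at this
        rw [this]; ring
    show ∑ u ∈ Wset (negLooped P) c v, ν u * (if u = v then A v v - lam else A u v) = 0
    rw [Finset.sum_subset hsub hzero]
    have hcol : ∑ u, ν u * A u v = lam * ν v := by
      have := congrFun heig v
      simpa [Matrix.vecMul, dotProduct] using this
    have hsplit : ∀ u : Fin n, ν u * (if u = v then A v v - lam else A u v)
        = ν u * A u v - (if u = v then lam * ν v else 0) := by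
      intro u; by_cases h : u = v <;> simp [h] <;> ring
    calc ∑ u, ν u * (if u = v then A v v - lam else A u v)
        = ∑ u, (ν u * A u v - (if u = v then lam * ν v else 0)) :=
          Finset.sum_congr rfl (fun u _ => hsplit u)
      _ = (∑ u, ν u * A u v) - ∑ u, (if u = v then lam * ν v else 0) :=
          Finset.sum_sub_distrib _ _
      _ = lam * ν v - lam * ν v := by
          rw [hcol]; congr 1; simp
      _ = 0 := by ring
lemma zero_of_signed_sum {n : ℕ} (W : Finset (Fin n)) (f : Fin n → ℝ) (σ : ℝ) (hσ : σ ≠ 0)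
    (hsum : ∑ u ∈ W, f u = 0) (hterm : ∀ u ∈ W, 0 ≤ σ * f u) : ∀ u ∈ W, f u = 0 := by
  intro u hu
  have h0 : ∑ u ∈ W, σ * f u = 0 := by rw [← Finset.mul_sum, hsum, mul_zero]
  have := (Finset.sum_eq_zero_iff_of_nonneg hterm).mp h0 u hu
  rcases mul_eq_zero.mp this with h | h
  · exact absurd h hσ
  · exact h

lemma step_inv {n : ℕ} (P : Fin n → Fin n → SignPatEntry)
    (hP : ∀ i j : Fin n, i ≠ j → P i j ≠ SignPatEntry.unk)
    (A : Matrix (Fin n) (Fin n) ℝ) (hA : QClass P A)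
    (lam : ℝ) (hlam : 0 < lam) (ν : Fin n → ℝ)
    (heig : Matrix.vecMul ν A = lam • ν)
    {c c' : Config n} (hstep : Step (negLooped P) c c')
    (hinv : GameInv ν c) : GameInv ν c' := by
  classical
  obtain ⟨hblack, ε, hε, hmark⟩ := hinv
  have hεne : ε ≠ 0 := by rcases hε with h | h <;> rw [h] <;> norm_num
  cases hstep with
  | force1 v u hv hW =>
      obtain ⟨B, hB, hsum⟩ := key_sum P hP A hA lam hlam ν heig c hblack v hv
      rw [hW] at hsum hB
      simp only [Finset.sum_singleton] at hsum
      have hu := hB u (Finset.mem_singleton_self u)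
      have hBne : B u ≠ 0 := ms_ne_zero hu.2 hu.1
      have hνu : ν u = 0 := by
        rcases mul_eq_zero.mp hsum with h | h
        · exact h
        · exact absurd h hBne
      refine ⟨?_, ε, hε, hmark⟩
      intro x hx
      rcases Finset.mem_insert.mp hx with h | h
      · subst h; exact hνu
      · exact hblack x h
  | force2 v hv hall =>
      obtain ⟨B, hB, hsum⟩ := key_sum P hP A hA lam hlam ν heig c hblack v hv
      have hW0 : ∀ u ∈ Wset (negLooped P) c v, ν u = 0 := by
        have key : ∃ σ : ℝ, σ ≠ 0 ∧ ∀ u ∈ Wset (negLooped P) c v, 0 ≤ σ * (ν u * B u) := by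
          rcases hall with hall | hall
          · refine ⟨ε, hεne, fun u hu => ?_⟩
            rcases hmark u _ (hall u hu) with h0 | hms
            · rw [h0]; simp
            · have hBu := hB u hu
              have := ms_mul_pos hBu.2 hms hBu.1
              nlinarith
          · refine ⟨-ε, neg_ne_zero.mpr hεne, fun u hu => ?_⟩
            rcases hmark u _ (hall u hu) with h0 | hms
            · rw [h0]; simp
            · have hBu := hB u hu
              have hms' : matchesSign (negLooped P u v) (-(ε * ν u)) := ms_inv_iff.mp hms
              have := ms_mul_pos hBu.2 hms' hBu.1
              nlinarith
        obtain ⟨σ, hσ, hterm⟩ := key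
        intro u hu
        have := zero_of_signed_sum _ _ σ hσ hsum hterm u hu
        rcases mul_eq_zero.mp this with h | h
        · exact h
        · exact absurd h (ms_ne_zero (hB u hu).2 (hB u hu).1)
      refine ⟨?_, ε, hε, hmark⟩
      intro x hx
      rcases Finset.mem_union.mp hx with h | h
      · exact hblack x h
      · exact hW0 x h
  | force3 v w s hv hs hw hwnone hmarked hex =>
      obtain ⟨B, hB, hsum⟩ := key_sum P hP A hA lam hlam ν heig c hblack v hv
      set es : ℝ := if s = SignPatEntry.pos then ε else -ε with hes
      have hesne : es ≠ 0 := by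
        rw [hes]; split
        · exact hεne
        · exact neg_ne_zero.mpr hεne
      have hterm : ∀ u ∈ (Wset (negLooped P) c v).erase w, 0 ≤ es * (ν u * B u) := by
        intro u hu
        obtain ⟨hne, huW⟩ := Finset.mem_erase.mp hu
        rcases hmark u _ (hmarked u huW hne) with h0 | hms
        · rw [h0]; simp
        · have hBu := hB u huW
          have hms' : matchesSign (negLooped P u v) (es * ν u) := by
            rcases hs with h | h <;> subst h
            · simpa [hes, SignPatEntry.mul] using hms
            · have : matchesSign (negLooped P u v) (-(ε * ν u)) := by
                apply ms_inv_iff.mp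
                simpa [SignPatEntry.mul] using hms
              simpa [hes, neg_mul] using this
          have := ms_mul_pos hBu.2 hms' hBu.1
          nlinarith
      have hsplit : ν w * B w + ∑ u ∈ (Wset (negLooped P) c v).erase w, ν u * B u = 0 := by
        rw [Finset.add_sum_erase _ (fun u => ν u * B u) hw]
        exact hsum
      have hnn : 0 ≤ es * ∑ u ∈ (Wset (negLooped P) c v).erase w, ν u * B u := by
        rw [Finset.mul_sum]
        exact Finset.sum_nonneg hterm
      have hle : es * (ν w * B w) ≤ 0 := by
        have hwB : ν w * B w = -∑ u ∈ (Wset (negLooped P) c v).erase w, ν u * B u := by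
          linarith
        rw [hwB, mul_neg]
        linarith
      refine ⟨hblack, ε, hε, ?_⟩
      intro u t hm
      by_cases huw : u = w
      · subst huw
        simp only [Function.update_self] at hm
        injection hm with hm
        subst hm
        by_cases hν : ν u = 0
        · exact Or.inl hν
        · right
          have hBw := hB u hw
          have hBne : B u ≠ 0 := ms_ne_zero hBw.2 hBw.1
          have hlt : es * (ν u * B u) < 0 :=
            lt_of_le_of_ne hle (mul_ne_zero hesne (mul_ne_zero hν hBne))
          have hpos : 0 < (-es * ν u) * B u := by nlinarith
          have hms : matchesSign (negLooped P u v) (-es * ν u) :=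
            ms_of_mul_pos hBw.2 hBw.1 hpos
          rcases hs with h | h <;> subst h
          · show matchesSign ((negLooped P u v).inv) (ε * ν u)
            apply ms_inv_iff.mpr
            simpa [hes, neg_mul] using hms
          · show matchesSign (negLooped P u v) (ε * ν u)
            simpa [hes, neg_mul, neg_neg] using hms
      · simp only [Function.update_of_ne huw] at hm
        exact hmark u t hm
  | force4 u hnomark hu =>
      refine ⟨hblack, if 0 ≤ ν u then 1 else -1,
        by by_cases h : 0 ≤ ν u <;> simp [h], ?_⟩
      intro x t hm
      by_cases hxu : x = u
      · subst hxu
        simp only [Function.update_self] at hm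
        injection hm with hm
        subst hm
        by_cases hν : ν x = 0
        · exact Or.inl hν
        · right
          show 0 < (if 0 ≤ ν x then (1:ℝ) else -1) * ν x
          rcases lt_or_gt_of_ne hν with h | h
          · rw [if_neg (by linarith)]; nlinarith
          · rw [if_pos (le_of_lt h)]; nlinarith
      · simp only [Function.update_of_ne hxu] at hm
        by_cases hb : x ∈ c.black
        · exact Or.inl (hblack x hb)
        · rw [hnomark x hb] at hm; cases hm

end Aux

/-- If `V_C` is a positive signed zero forcing set of `P_s` (i.e. a signed
zero forcing set of the negative looped pattern `P_s⁻`), then every real left eigenvector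
of any `A ∈ Q_s(P_s)` for a positive eigenvalue vanishing on `V_C` is zero; equivalently
(PBH test), every positive eigenvalue of every `A ∈ Q_s(P_s)` is controllable for the
input set `V_C`. -/
theorem stmt3 {n : ℕ} (P : Fin n → Fin n → SignPatEntry)
    (hP : ∀ i j : Fin n, i ≠ j → P i j ≠ SignPatEntry.unk)
    (VC : Finset (Fin n)) (hVC : SignedZFS (negLooped P) VC) :
    (∀ A : Matrix (Fin n) (Fin n) ℝ, QClass P A →
      ∀ lam : ℝ, 0 < lam → ∀ ν : Fin n → ℝ,
        Matrix.vecMul ν A = lam • ν → (∀ j ∈ VC, ν j = 0) → ν = 0) ∧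
    (∀ A : Matrix (Fin n) (Fin n) ℝ, QClass P A →
      ∀ lam : ℝ, 0 < lam → ∀ w : Fin n → ℂ, w ≠ 0 →
        Matrix.vecMul w (A.map (Complex.ofReal ·)) = (lam : ℂ) • w →
        ∃ j ∈ VC, w j ≠ 0) := by
  have part1 : ∀ A : Matrix (Fin n) (Fin n) ℝ, QClass P A →
      ∀ lam : ℝ, 0 < lam → ∀ ν : Fin n → ℝ,
        Matrix.vecMul ν A = lam • ν → (∀ j ∈ VC, ν j = 0) → ν = 0 := by
    intro A hA lam hlam ν heig hVC0
    obtain ⟨c, hrt, hall⟩ := hVC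
    have hfin : GameInv ν c := by
      clear hall
      induction hrt with
      | refl =>
          refine ⟨hVC0, 1, Or.inl rfl, fun u s h => ?_⟩
          simp [initConfig] at h
      | tail hab hbc ih => exact step_inv P hP A hA lam hlam ν heig hbc ih
    funext j
    exact hfin.1 j (hall ▸ Finset.mem_univ j)
  refine ⟨part1, ?_⟩
  intro A hA lam hlam w hw heig
  by_contra hcon
  push_neg at hcon
  apply hw
  have hcomp : ∀ j : Fin n, ∑ i, w i * (A i j : ℂ) = (lam : ℂ) * w j := by
    intro j
    have := congrFun heig j
    simpa [Matrix.vecMul, dotProduct, Matrix.map] using this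
  have hre : Matrix.vecMul (fun i => (w i).re) A = lam • (fun i => (w i).re) := by
    funext j
    have h := congrArg Complex.re (hcomp j)
    simp only [Complex.re_sum, Complex.mul_re, Complex.ofReal_re, Complex.ofReal_im,
      mul_zero, sub_zero] at h
    simpa [Matrix.vecMul, dotProduct] using h
  have him : Matrix.vecMul (fun i => (w i).im) A = lam • (fun i => (w i).im) := by
    funext j
    have h := congrArg Complex.im (hcomp j)
    simp only [Complex.im_sum, Complex.mul_im, Complex.ofReal_re, Complex.ofReal_im,
      mul_zero, zero_add, add_zero, zero_mul] at h
    simpa [Matrix.vecMul, dotProduct] using h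
  have hre0 : (fun i => (w i).re) = 0 :=
    part1 A hA lam hlam _ hre (fun j hj => by rw [hcon j hj]; simp)
  have him0 : (fun i => (w i).im) = 0 :=
    part1 A hA lam hlam _ him (fun j hj => by rw [hcon j hj]; simp)
  funext i
  have h1 := congrFun hre0 i
  have h2 := congrFun him0 i
  simp only [Pi.zero_apply] at h1 h2
  exact Complex.ext h1 h2
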